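/- Let e = e₁, e₂, … be any infinite sequence of closed β-normal λ-terms, and define the numeral system c by c₀ = I and cₙ = <c_{n-1}, eₙ> for n ≥ 1. If S is a closed λ-term such that (S cₙ) ≃β c_{n+1} for all n ∈ ℕ (a Successor for c), then the closed λ-term S' = λn.(S n F) is a generator for e, i.e. (S' I) ≃β e₁ and (S' <e₁,…,eₙ>) ≃β e_{n+1} for all n ≥ 1. Consequently, if e has no generator then c has no Successor. -/
import Mathlib


/-- Untyped λ-terms in de Bruijn notation. -/
inductive Lam : Type
  | var : ℕ → Lam
  | app : Lam → Lam → Lam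
  | lam : Lam → Lam
  deriving DecidableEq

namespace Lam

/-- Shift by one the free variables with index ≥ `d`. -/
def lift (d : ℕ) : Lam → Lam
  | var n => if n < d then var n else var (n + 1)
  | app M N => app (lift d M) (lift d N)
  | lam M => lam (lift (d + 1) M)

/-- Capture-avoiding substitution of `N` for the free variable of index `n`. -/
def subst : Lam → ℕ → Lam → Lam
  | var m, n, N => if m = n then N else if n < m then var (m - 1) else var m
  | app M₁ M₂, n, N => app (subst M₁ n N) (subst M₂ n N)
  | lam M, n, N => lam (subst M (n + 1) (lift 0 N))

/-- One-step β-reduction (contraction of a β-redex anywhere in the term). -/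
inductive Step : Lam → Lam → Prop
  | beta (M N : Lam) : Step (app (lam M) N) (subst M 0 N)
  | appL {M M' : Lam} (N : Lam) : Step M M' → Step (app M N) (app M' N)
  | appR (M : Lam) {N N' : Lam} : Step N N' → Step (app M N) (app M N')
  | lam {M M' : Lam} : Step M M' → Step (Lam.lam M) (Lam.lam M')

/-- β-equivalence: the equivalence relation generated by one-step β-reduction. -/
def BetaEq : Lam → Lam → Prop := Relation.EqvGen Step

/-- The variable of index `n` occurs free in the term. -/
def HasFree : Lam → ℕ → Prop
  | var m, n => m = n
  | app M N, n => HasFree M n ∨ HasFree N n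
  | lam M, n => HasFree M (n + 1)

/-- A term is closed if it has no free variables. -/
def Closed (M : Lam) : Prop := ∀ n, ¬ HasFree M n

/-- A term is β-normal: it contains no β-redex. -/
def IsBetaNormal : Lam → Prop
  | app (lam _) _ => False
  | app M N => IsBetaNormal M ∧ IsBetaNormal N
  | lam M => IsBetaNormal M
  | var _ => True

/-- A term is βη-normal: it contains no β-redex and no η-redex
`λx.(M x)` with `x` not free in `M`. -/
def IsBetaEtaNormal : Lam → Prop
  | app (lam _) _ => False
  | app M N => IsBetaEtaNormal M ∧ IsBetaEtaNormal N
  | lam (app M (var 0)) => HasFree M 0 ∧ IsBetaEtaNormal (app M (var 0))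
  | lam M => IsBetaEtaNormal M
  | var _ => True

/-- `I = λx.x`. -/
def I : Lam := lam (var 0)

/-- `T = λxλy.x`. -/
def T : Lam := lam (lam (var 1))

/-- `F = λxλy.y`. -/
def F : Lam := lam (lam (var 0))

/-- The pair `<M,N> = λx.(x M N)` (the binder shifts the free variables of `M,N`). -/
def pair (M N : Lam) : Lam := lam (app (app (var 0) (lift 0 M)) (lift 0 N))

end Lam

/-- For a sequence `U` (where `U i` codes the mathematical `U_{i+1}`),
`tuple U n` is the term `<U₁,…,Uₙ> = <…<<I,U₁>,U₂>,…,Uₙ>` (and `tuple U 0 = I`). -/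
def Lam.tuple (U : ℕ → Lam) : ℕ → Lam
  | 0 => Lam.I
  | n + 1 => Lam.pair (Lam.tuple U n) (U n)

/-- The numeral system `c` built on a sequence `e` (where `e i` codes the mathematical
`e_{i+1}`) : `c₀ = I` and `cₙ = <c_{n-1}, eₙ>` for `n ≥ 1`. -/
def Lam.sysC (e : ℕ → Lam) : ℕ → Lam
  | 0 => Lam.I
  | n + 1 => Lam.pair (Lam.sysC e n) (e n)

namespace Lam

theorem betaEq_appL (N : Lam) {M M' : Lam} (h : BetaEq M M') :
    BetaEq (app M N) (app M' N) := by
  induction h with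
  | rel a b h => exact Relation.EqvGen.rel _ _ (Step.appL N h)
  | refl a => exact Relation.EqvGen.refl _
  | symm a b _ ih => exact Relation.EqvGen.symm _ _ ih
  | trans a b c _ _ ih1 ih2 => exact Relation.EqvGen.trans _ _ _ ih1 ih2

theorem subst_lift (M : Lam) : ∀ d N, subst (lift d M) d N = M := by
  induction M with
  | var m =>
    intro d N
    by_cases h : m < d
    · simp only [lift, if_pos h, subst, if_neg (by omega : ¬ m = d),
        if_neg (by omega : ¬ d < m)]
    · simp only [lift, if_neg h, subst, if_neg (by omega : ¬ m + 1 = d),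
        if_pos (by omega : d < m + 1), Nat.add_sub_cancel]
  | app A B ihA ihB => intro d N; simp [lift, subst, ihA, ihB]
  | lam A ih => intro d N; simp [lift, subst, ih]

theorem hasFree_lift (M : Lam) : ∀ d n, HasFree (lift d M) n ↔
    (n < d ∧ HasFree M n) ∨ (d < n ∧ HasFree M (n - 1)) := by
  induction M with
  | var m =>
    intro d n
    by_cases h : m < d <;> simp [lift, h, HasFree] <;> omega
  | app A B ihA ihB =>
    intro d n
    simp only [lift, HasFree, ihA, ihB]
    tauto
  | lam A ih =>
    intro d n
    simp only [lift, HasFree, ih]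
    constructor
    · rintro (⟨h1, h2⟩ | ⟨h1, h2⟩)
      · exact Or.inl ⟨by omega, h2⟩
      · refine Or.inr ⟨by omega, ?_⟩
        have : n - 1 + 1 = n := by omega
        rwa [this]
    · rintro (⟨h1, h2⟩ | ⟨h1, h2⟩)
      · exact Or.inl ⟨by omega, h2⟩
      · refine Or.inr ⟨by omega, ?_⟩
        have e1 : n - 1 + 1 = n := by omega
        rw [e1] at h2
        simpa using h2

theorem tuple_eq_sysC (e : ℕ → Lam) : ∀ n, tuple e n = sysC e n := by
  intro n
  induction n with
  | zero => rfl
  | succ n ih => simp [tuple, sysC, ih]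

theorem key_betaEq (S : Lam) (e : ℕ → Lam)
    (hS : ∀ n, BetaEq (app S (sysC e n)) (sysC e (n + 1))) (n : ℕ) :
    BetaEq (app (lam (app (app (lift 0 S) (var 0)) F)) (sysC e n)) (e n) := by
  set M := sysC e n with hM
  have h1 : Step (app (lam (app (app (lift 0 S) (var 0)) F)) M) (app (app S M) F) := by
    have := Step.beta (app (app (lift 0 S) (var 0)) F) M
    simpa [subst, subst_lift, F] using this
  have h2 : BetaEq (app (app S M) F) (app (sysC e (n + 1)) F) :=
    betaEq_appL F (hS n)
  have h3 : Step (app (sysC e (n + 1)) F) (app (app F M) (e n)) := by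
    have := Step.beta (app (app (var 0) (lift 0 M)) (lift 0 (e n))) F
    simpa [sysC, pair, subst, subst_lift, ← hM] using this
  have h4 : Step (app F M) I :=  by
    have := Step.beta (lam (var 0)) M
    simpa [F, I, subst, lift] using this
  have h5 : Step (app I (e n)) (e n) := by
    have := Step.beta (var 0) (e n)
    simpa [I, subst] using this
  refine Relation.EqvGen.trans _ _ _ (Relation.EqvGen.rel _ _ h1) ?_
  refine Relation.EqvGen.trans _ _ _ h2 ?_
  refine Relation.EqvGen.trans _ _ _ (Relation.EqvGen.rel _ _ h3) ?_
  refine Relation.EqvGen.trans _ _ _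
    (Relation.EqvGen.rel _ _ (Step.appL (e n) h4)) (Relation.EqvGen.rel _ _ h5)

end Lam

/-- For any infinite sequence `e` of closed β-normal λ-terms and the numeral system `c`
(`c₀ = I`, `cₙ = <c_{n-1}, eₙ>`) : if `S` is a closed Successor for `c` then
`S' = λn.(S n F)` is a generator for `e`; consequently, if `e` has no generator then
`c` has no Successor. (Here `e i` codes the mathematical `e_{i+1}`.) -/
theorem statement12 (e : ℕ → Lam)
    (he : ∀ i, Lam.Closed (e i) ∧ Lam.IsBetaNormal (e i)) :
    (∀ S : Lam, Lam.Closed S →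
      (∀ n, Lam.BetaEq (Lam.app S (Lam.sysC e n)) (Lam.sysC e (n + 1))) →
      Lam.Closed (Lam.lam (Lam.app (Lam.app (Lam.lift 0 S) (Lam.var 0)) Lam.F)) ∧
      Lam.BetaEq (Lam.app (Lam.lam (Lam.app (Lam.app (Lam.lift 0 S) (Lam.var 0)) Lam.F))
        Lam.I) (e 0) ∧
      ∀ n, 1 ≤ n →
        Lam.BetaEq (Lam.app (Lam.lam (Lam.app (Lam.app (Lam.lift 0 S) (Lam.var 0)) Lam.F))
          (Lam.tuple e n)) (e n)) ∧
    ((¬ ∃ A, Lam.Closed A ∧ Lam.BetaEq (Lam.app A Lam.I) (e 0) ∧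
          ∀ n, 1 ≤ n → Lam.BetaEq (Lam.app A (Lam.tuple e n)) (e n)) →
      ¬ ∃ S, Lam.Closed S ∧ ∀ n, Lam.BetaEq (Lam.app S (Lam.sysC e n)) (Lam.sysC e (n + 1))) := by
  have main : ∀ S : Lam, Lam.Closed S →
      (∀ n, Lam.BetaEq (Lam.app S (Lam.sysC e n)) (Lam.sysC e (n + 1))) →
      Lam.Closed (Lam.lam (Lam.app (Lam.app (Lam.lift 0 S) (Lam.var 0)) Lam.F)) ∧
      Lam.BetaEq (Lam.app (Lam.lam (Lam.app (Lam.app (Lam.lift 0 S) (Lam.var 0)) Lam.F))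
        Lam.I) (e 0) ∧
      ∀ n, 1 ≤ n →
        Lam.BetaEq (Lam.app (Lam.lam (Lam.app (Lam.app (Lam.lift 0 S) (Lam.var 0)) Lam.F))
          (Lam.tuple e n)) (e n) := by
    intro S hSc hS
    refine ⟨?_, ?_, ?_⟩
    · intro n h
      simp only [Lam.HasFree, Lam.F, Lam.hasFree_lift] at h
      rcases h with ((⟨h1, _⟩ | ⟨_, h2⟩) | h) | h
      · omega
      · exact hSc _ h2
      · omega
      · omega
    · have := Lam.key_betaEq S e hS 0
      simpa [Lam.sysC] using this
    · intro n _
      rw [Lam.tuple_eq_sysC]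
      exact Lam.key_betaEq S e hS n
  refine ⟨main, ?_⟩
  rintro hne ⟨S, hSc, hS⟩
  obtain ⟨hc, h0, hn⟩ := main S hSc hS
  exact hne ⟨_, hc, h0, hn⟩
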